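/- arXiv:1402.5998 — 3 statements merged into one kernel-verified Lean document; each statement's English description precedes it below -/
import Mathlib

section
/- Let i ≠ k be distinct indices < α and define the cylindrification c_i on subsets of ᵅX by c_i(A) = {s | ∃ a, Function.update s i a ∈ A}, and let I_k(A) = {s | s k ∈ interior {a | Function.update s k a ∈ A}}. If i ∉ Δ(A) where Δ(A) = {j | c_j A ≠ A} (the dimension set of A), then c_i(I_k(A)) = I_k(A). -/
/-- The i-th cylindrifier (existential projection along coordinate i). -/
def cyl {α X : Type*} [DecidableEq α] (i : α) (A : Set (α → X)) : Set (α → X) :=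
  {s | ∃ a : X, Function.update s i a ∈ A}

/-- The coordinatewise interior operator. -/
def cylIntr {α X : Type*} [DecidableEq α] [TopologicalSpace X] (k : α)
    (A : Set (α → X)) : Set (α → X) :=
  {s | s k ∈ interior {a : X | Function.update s k a ∈ A}}

/-- The dimension set of A. -/
def dimSet {α X : Type*} [DecidableEq α] (A : Set (α → X)) : Set α :=
  {j | cyl j A ≠ A}

theorem cyl_cylIntr_of_not_mem_dimSet {α X : Type*} [DecidableEq α]
    [TopologicalSpace X] (i k : α) (hik : i ≠ k) (A : Set (α → X))
    (hi : i ∉ dimSet A) : cyl i (cylIntr k A) = cylIntr k A := by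
  have h : cyl i A = A := not_not.mp hi
  have hA : ∀ (s : α → X) (b : X), Function.update s i b ∈ A ↔ s ∈ A := by
    intro s b
    constructor
    · intro hs
      rw [← h]; exact ⟨b, hs⟩
    · intro hs
      rw [← h]
      exact ⟨s i, by rwa [Function.update_idem, Function.update_eq_self]⟩
  have hI : ∀ (s : α → X) (b : X),
      Function.update s i b ∈ cylIntr k A ↔ s ∈ cylIntr k A := by
    intro s b
    simp only [cylIntr, Set.mem_setOf_eq, Function.update_of_ne hik.symm]
    have : {a : X | Function.update (Function.update s i b) k a ∈ A}
        = {a : X | Function.update s k a ∈ A} := by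
      ext a
      simp only [Set.mem_setOf_eq]; rw [Function.update_comm hik]
      exact hA _ b
    rw [this]
  ext s
  constructor
  · rintro ⟨a, ha⟩
    exact (hI s a).mp ha
  · intro hs
    exact ⟨s i, by rwa [Function.update_eq_self]⟩
end

section
/- Let B be an atomic Boolean algebra and f : B → Set V an injective Boolean homomorphism (a representation). If f is atomic, i.e. for every s ∈ V the set f⁻¹(s) := {a ∈ B | s ∈ f a} contains an atom of B, then f is complete: for every X ⊆ B whose supremum ⨆X exists in B, f(⨆ X) = ⋃_{x ∈ X} f x. Conversely, if f preserves all existing suprema then f⁻¹(s) contains an atom for every s ∈ V and B is atomic. -/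
/-- For an injective Boolean representation `f : B → Set V` of an atomic
Boolean algebra: `f` is atomic (every point lies in the image of an atom)
iff `f` is complete (preserves all existing suprema); the completeness
direction moreover yields atomicity of `B`. -/
theorem atomic_iff_complete_representation {B V : Type*} [BooleanAlgebra B]
    [IsAtomic B] [Nonempty V] (f : B → Set V) (hinj : Function.Injective f)
    (hsup : ∀ a b : B, f (a ⊔ b) = f a ∪ f b)
    (hinf : ∀ a b : B, f (a ⊓ b) = f a ∩ f b)
    (hcompl : ∀ a : B, f aᶜ = (f a)ᶜ)
    (htop : f ⊤ = Set.univ) (hbot : f ⊥ = ∅) :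
    ((∀ s : V, ∃ a : B, IsAtom a ∧ s ∈ f a) →
      ∀ (X : Set B) (m : B), IsLUB X m → f m = ⋃ x ∈ X, f x) ∧
    ((∀ (X : Set B) (m : B), IsLUB X m → f m = ⋃ x ∈ X, f x) →
      (∀ s : V, ∃ a : B, IsAtom a ∧ s ∈ f a) ∧ IsAtomic B) := by
  have hmono : ∀ x y : B, x ≤ y → f x ⊆ f y := by
    intro x y hxy
    have h : f y = f x ∪ f y := by rw [← hsup, sup_eq_right.mpr hxy]
    rw [h]; exact Set.subset_union_left
  constructor
  · intro hatomic X m hm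
    apply Set.Subset.antisymm
    · intro s hs
      by_contra hns
      simp only [Set.mem_iUnion] at hns
      push_neg at hns
      obtain ⟨a, ha, hsa⟩ := hatomic s
      have hub : ∀ x ∈ X, x ≤ aᶜ := by
        intro x hx
        rcases ha.le_iff.mp (inf_le_left : a ⊓ x ≤ a) with h1 | h1
        · exact le_compl_iff_disjoint_left.mpr (disjoint_iff.mpr h1)
        · exfalso
          have hax : a ≤ x := by
            rw [← h1]; exact inf_le_right
          exact hns x hx (hmono a x hax hsa)
      have hma : m ≤ aᶜ := hm.2 hub
      have : s ∈ (f a)ᶜ := by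
        rw [← hcompl]; exact hmono m aᶜ hma hs
      exact this hsa
    · apply Set.iUnion₂_subset
      intro x hx
      exact hmono x m (hm.1 hx)
  · intro hcomp
    have hlub : IsLUB {a : B | IsAtom a} ⊤ := by
      constructor
      · intro a _; exact le_top
      · intro u hu
        have huc : uᶜ = ⊥ := by
          rcases IsAtomic.eq_bot_or_exists_atom_le uᶜ with h | ⟨a, ha, hle⟩
          · exact h
          · exfalso
            have h1 : a ≤ u := hu ha
            have : a ≤ u ⊓ uᶜ := le_inf h1 hle
            rw [inf_compl_eq_bot] at this
            exact ha.1 (le_bot_iff.mp this)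
        have : u = ⊤ := by
          have := congrArg compl huc
          simpa using this
        exact this.ge
    constructor
    · intro s
      have h := hcomp _ _ hlub
      rw [htop] at h
      have hs : s ∈ ⋃ x ∈ {a : B | IsAtom a}, f x := by
        rw [← h]; trivial
      simp only [Set.mem_iUnion] at hs
      obtain ⟨a, ha, hsa⟩ := hs
      exact ⟨a, ha, hsa⟩
    · infer_instance
end

section
/- Let B₁, B₂ be atomless or atomic Boolean algebras and suppose for each i the games are such that Duplicator has a winning strategy in the EF game of every finite length between A_i and B_i (i in a finite index set). Then Duplicator has a winning strategy in the EF game of every finite length between the products Π A_i and Π B_i; in particular finite products of pairwise elementarily equivalent Boolean algebras are elementarily equivalent. -/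
open FirstOrder

/-- A play of the EF game between two Boolean algebras is a partial
isomorphism if it preserves the quantifier-free Boolean structure. -/
def IsBAPartialIso {M N : Type*} [BooleanAlgebra M] [BooleanAlgebra N]
    (p : List (M × N)) : Prop :=
  ∀ q r s : M × N, q ∈ p → r ∈ p → s ∈ p →
    (q.1 = r.1 ↔ q.2 = r.2) ∧ (q.1 ≤ r.1 ↔ q.2 ≤ r.2) ∧
    (q.1 ⊓ r.1 = s.1 ↔ q.2 ⊓ r.2 = s.2) ∧
    (q.1 ⊔ r.1 = s.1 ↔ q.2 ⊔ r.2 = s.2) ∧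
    (q.1ᶜ = r.1 ↔ q.2ᶜ = r.2) ∧
    (q.1 = ⊥ ↔ q.2 = ⊥) ∧ (q.1 = ⊤ ↔ q.2 = ⊤)

/-- Duplicator has a winning strategy in the EF game of length `n`
between the Boolean algebras `M` and `N`. -/
def DupWins (M N : Type*) [BooleanAlgebra M] [BooleanAlgebra N] (n : ℕ) : Prop :=
  ∃ I : ℕ → Set (List (M × N)),
    (∀ k p, p ∈ I k → IsBAPartialIso p) ∧ ([] ∈ I n) ∧
    (∀ k p, p ∈ I (k + 1) →
      (∀ a : M, ∃ b : N, (a, b) :: p ∈ I k) ∧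
      (∀ b : N, ∃ a : M, (a, b) :: p ∈ I k))

noncomputable instance (X : Type*) [BooleanAlgebra X] :
    Language.order.Structure X :=
  Language.orderStructure X

/-- Quantifier depth of a bounded formula. -/
def qd : ∀ {n : ℕ}, Language.order.BoundedFormula Empty n → ℕ
  | _, .falsum => 0
  | _, .equal _ _ => 0
  | _, .rel _ _ => 0
  | _, .imp f g => max (qd f) (qd g)
  | _, .all f => qd f + 1

lemma order_term_var {m : ℕ} (t : Language.order.Term (Empty ⊕ Fin m)) :
    ∃ j : Fin m, t = Language.Term.var (Sum.inr j) := by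
  cases t with
  | var x =>
    cases x with
    | inl e => exact e.elim
    | inr j => exact ⟨j, rfl⟩
  | func f _ => exact f.elim

lemma ef_key {M N : Type*} [BooleanAlgebra M] [BooleanAlgebra N]
    (F : ℕ → Set (List (M × N)))
    (hiso : ∀ k p, p ∈ F k → IsBAPartialIso p)
    (hstep : ∀ k p, p ∈ F (k + 1) →
      (∀ a : M, ∃ b : N, (a, b) :: p ∈ F k) ∧
      (∀ b : N, ∃ a : M, (a, b) :: p ∈ F k))
    {m : ℕ} (φ : Language.order.BoundedFormula Empty m) :
    ∀ (k : ℕ) (p : List (M × N)), p ∈ F k → qd φ ≤ k →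
      ∀ (v0 : Empty → M) (w0 : Empty → N) (v : Fin m → M) (w : Fin m → N),
      (∀ j, (v j, w j) ∈ p) →
      (φ.Realize v0 v ↔ φ.Realize w0 w) := by
  induction φ with
  | falsum =>
    intro k p hp hd v0 w0 v w hvw
    simp [Language.BoundedFormula.Realize]
  | equal t₁ t₂ =>
    intro k p hp hd v0 w0 v w hvw
    obtain ⟨j₁, rfl⟩ := order_term_var t₁
    obtain ⟨j₂, rfl⟩ := order_term_var t₂
    have H := hiso k p hp (v j₁, w j₁) (v j₂, w j₂) (v j₁, w j₁)
      (hvw j₁) (hvw j₂) (hvw j₁)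
    exact H.1
  | rel R ts =>
    intro k p hp hd v0 w0 v w hvw
    cases R with
    | le =>
      obtain ⟨j₀, h₀⟩ := order_term_var (ts 0)
      obtain ⟨j₁, h₁⟩ := order_term_var (ts 1)
      have H := hiso k p hp (v j₀, w j₀) (v j₁, w j₁) (v j₀, w j₀)
        (hvw j₀) (hvw j₁) (hvw j₀)
      have e1 : (Language.BoundedFormula.rel Language.orderRel.le ts).Realize v0 v ↔
          v j₀ ≤ v j₁ := by
        show Language.Term.realize (Sum.elim v0 v) (ts 0) ≤
            Language.Term.realize (Sum.elim v0 v) (ts 1) ↔ _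
        rw [h₀, h₁]
        simp [Language.Term.realize]
      have e2 : (Language.BoundedFormula.rel Language.orderRel.le ts).Realize w0 w ↔
          w j₀ ≤ w j₁ := by
        show Language.Term.realize (Sum.elim w0 w) (ts 0) ≤
            Language.Term.realize (Sum.elim w0 w) (ts 1) ↔ _
        rw [h₀, h₁]
        simp [Language.Term.realize]
      rw [e1, e2]
      exact H.2.1
  | imp f g ihf ihg =>
    intro k p hp hd v0 w0 v w hvw
    have hf := ihf k p hp (le_trans (le_max_left _ _) hd) v0 w0 v w hvw
    have hg := ihg k p hp (le_trans (le_max_right _ _) hd) v0 w0 v w hvw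
    show (f.Realize v0 v → g.Realize v0 v) ↔ (f.Realize w0 w → g.Realize w0 w)
    rw [hf, hg]
  | all f ih =>
    intro k p hp hd v0 w0 v w hvw
    obtain ⟨k', rfl⟩ : ∃ k', k = k' + 1 := by
      cases k with
      | zero => exact absurd hd (by simp [qd])
      | succ k' => exact ⟨k', rfl⟩
    have hd' : qd f ≤ k' := by
      have : qd f + 1 ≤ k' + 1 := hd
      omega
    constructor
    · intro hM b
      obtain ⟨a, ha⟩ := (hstep k' p hp).2 b
      have hmem : ∀ j, ((Fin.snoc v a : Fin _ → M) j,
          (Fin.snoc w b : Fin _ → N) j) ∈ (a, b) :: p := by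
        intro j
        refine Fin.lastCases ?_ (fun i => ?_) j
        · simp [Fin.snoc_last]
        · simp only [Fin.snoc_castSucc]
          exact List.mem_cons_of_mem _ (hvw i)
      exact (ih k' ((a, b) :: p) ha hd' v0 w0 _ _ hmem).1 (hM a)
    · intro hN a
      obtain ⟨b, hb⟩ := (hstep k' p hp).1 a
      have hmem : ∀ j, ((Fin.snoc v a : Fin _ → M) j,
          (Fin.snoc w b : Fin _ → N) j) ∈ (a, b) :: p := by
        intro j
        refine Fin.lastCases ?_ (fun i => ?_) j
        · simp [Fin.snoc_last]
        · simp only [Fin.snoc_castSucc]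
          exact List.mem_cons_of_mem _ (hvw i)
      exact (ih k' ((a, b) :: p) hb hd' v0 w0 _ _ hmem).2 (hN b)

lemma dupWins_ee {M N : Type*} [BooleanAlgebra M] [BooleanAlgebra N]
    (h : ∀ n, DupWins M N n) : M ≅[Language.order] N := by
  rw [Language.elementarilyEquivalent_iff]
  intro φ
  obtain ⟨F, hiso, hnil, hstep⟩ := h (qd φ)
  exact ef_key F hiso hstep φ (qd φ) [] hnil le_rfl default default
    default default (fun j => j.elim0)

lemma dupWins_pi {I : Type} (A B : I → Type) [∀ i, BooleanAlgebra (A i)]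
    [∀ i, BooleanAlgebra (B i)] (n : ℕ) (h : ∀ i, DupWins (A i) (B i) n) :
    DupWins (∀ i, A i) (∀ i, B i) n := by
  choose F hiso hnil hstep using h
  refine ⟨fun k => {p | ∀ i, p.map (fun q => (q.1 i, q.2 i)) ∈ F i k}, ?_, ?_, ?_⟩
  · intro k p hp q r s hq hr hs
    have H := fun i => hiso i k _ (hp i) (q.1 i, q.2 i) (r.1 i, r.2 i) (s.1 i, s.2 i)
      (List.mem_map_of_mem hq) (List.mem_map_of_mem hr) (List.mem_map_of_mem hs)
    refine ⟨?_, ?_, ?_, ?_, ?_, ?_, ?_⟩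
    · rw [funext_iff, funext_iff]; exact forall_congr' fun i => (H i).1
    · rw [Pi.le_def, Pi.le_def]; exact forall_congr' fun i => (H i).2.1
    · rw [funext_iff, funext_iff]; exact forall_congr' fun i => (H i).2.2.1
    · rw [funext_iff, funext_iff]; exact forall_congr' fun i => (H i).2.2.2.1
    · rw [funext_iff, funext_iff]; exact forall_congr' fun i => (H i).2.2.2.2.1
    · rw [funext_iff, funext_iff]; exact forall_congr' fun i => (H i).2.2.2.2.2.1
    · rw [funext_iff, funext_iff]; exact forall_congr' fun i => (H i).2.2.2.2.2.2
  · intro i; simpa using hnil i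
  · intro k p hp
    constructor
    · intro a
      have := fun i => (hstep i k _ (hp i)).1 (a i)
      choose b hb using this
      exact ⟨b, fun i => by simpa only [List.map_cons] using hb i⟩
    · intro b
      have := fun i => (hstep i k _ (hp i)).2 (b i)
      choose a ha using this
      exact ⟨a, fun i => by simpa only [List.map_cons] using ha i⟩

/-- Feferman–Vaught instance: if Duplicator wins all finite EF games between
`A i` and `B i` for each `i` in a finite index set, then she wins all finite
EF games between the products; in particular the products are elementarily
equivalent. -/
theorem fefermanVaught_products (I : Type) [Fintype I]
    (A B : I → Type) [∀ i, BooleanAlgebra (A i)] [∀ i, BooleanAlgebra (B i)]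
    (h : ∀ i : I, ∀ n : ℕ, DupWins (A i) (B i) n) :
    (∀ n : ℕ, DupWins (∀ i, A i) (∀ i, B i) n) ∧
    ((∀ i, A i) ≅[Language.order] (∀ i, B i)) := by
  have h1 : ∀ n, DupWins (∀ i, A i) (∀ i, B i) n :=
    fun n => dupWins_pi A B n (fun i => h i n)
  exact ⟨h1, dupWins_ee h1⟩
end
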